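/- arXiv:2203.06056 — 2 statements merged into one kernel-verified Lean document; each statement's English description precedes it below -/
import Mathlib

section
/- Let J = J_{m₁}(λ₁) ⊕ … ⊕ J_{m_k}(λ_k) be a block Jordan matrix over ℂ whose blocks have pairwise distinct eigenvalues λ₁, …, λ_k. Then a vector v ∈ ℂ^{m₁+…+m_k} is cyclic for J if and only if for every d ∈ {1,…,k} the coordinate v_{m₁+…+m_d} (the last coordinate within the d-th block) is nonzero. -/
/-- The m×m Jordan block `λ•I + N`, `N` the nilpotent shift. -/
def jordanBlock (m : ℕ) (lam : ℂ) : Matrix (Fin m) (Fin m) ℂ :=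
  lam • 1 + Matrix.of (fun i j : Fin m => if (i : ℕ) + 1 = (j : ℕ) then (1 : ℂ) else 0)

open Polynomial Matrix

def shiftN (m : ℕ) : Matrix (Fin m) (Fin m) ℂ :=
  Matrix.of (fun i j : Fin m => if (i : ℕ) + 1 = (j : ℕ) then (1 : ℂ) else 0)

lemma shiftN_mulVec (m : ℕ) (w : Fin m → ℂ) (i : Fin m) :
    (shiftN m).mulVec w i = if h : (i : ℕ) + 1 < m then w ⟨i + 1, h⟩ else 0 := by
  unfold shiftN
  rw [mulVec, dotProduct]
  split
  · rename_i h
    rw [Finset.sum_eq_single (⟨(i:ℕ)+1, h⟩ : Fin m)]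
    · simp
    · intro b _ hb
      simp only [of_apply]
      rw [if_neg (fun hb' => hb (Fin.ext hb'.symm)), zero_mul]
    · simp
  · rename_i h
    apply Finset.sum_eq_zero
    intro b _
    simp only [of_apply]
    rw [if_neg ?_, zero_mul]
    intro hb'
    exact h (hb' ▸ b.isLt)

lemma shiftN_pow_mulVec (m r : ℕ) (w : Fin m → ℂ) (i : Fin m) :
    ((shiftN m) ^ r).mulVec w i = if h : (i : ℕ) + r < m then w ⟨i + r, h⟩ else 0 := by
  induction r generalizing i with
  | zero => simp
  | succ r ih =>
    rw [pow_succ', ← mulVec_mulVec, shiftN_mulVec]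
    split
    · rename_i h
      rw [ih]
      simp only
      split
      · rename_i h2
        rw [dif_pos (by omega)]
        congr 1
        exact Fin.ext (by simp; omega)
      · rename_i h2
        rw [dif_neg (by omega)]
    · rename_i h
      rw [dif_neg (by omega)]

lemma aeval_X_sub_C (m : ℕ) (lam : ℂ) :
    aeval (jordanBlock m lam) (X - C lam) = shiftN m := by
  rw [map_sub, aeval_X, aeval_C, Algebra.algebraMap_eq_smul_one, jordanBlock,
    add_sub_cancel_left]
  rfl

lemma block_annihilate (m : ℕ) (lam : ℂ) (hm : 0 < m) (p : ℂ[X]) (v : Fin m → ℂ)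
    (hv : v ⟨m - 1, by omega⟩ = 0) (hdvd : (X - C lam) ^ (m - 1) ∣ p) :
    (aeval (jordanBlock m lam) p).mulVec v = 0 := by
  obtain ⟨q, hq⟩ := hdvd
  rw [hq, mul_comm, _root_.map_mul, map_pow, aeval_X_sub_C, ← mulVec_mulVec]
  have : (shiftN m ^ (m - 1)).mulVec v = 0 := by
    funext i
    rw [shiftN_pow_mulVec]
    split
    · rename_i h
      have hi : (i : ℕ) = 0 := by omega
      rw [show (⟨(i:ℕ) + (m-1), h⟩ : Fin m) = ⟨m - 1, by omega⟩ from Fin.ext (by simp; omega)]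
      exact hv
    · rfl
  rw [this, mulVec_zero]

lemma block_dvd (m : ℕ) (lam : ℂ) (hm : 0 < m) (p : ℂ[X]) (v : Fin m → ℂ)
    (hv : v ⟨m - 1, by omega⟩ ≠ 0)
    (h0 : (aeval (jordanBlock m lam) p).mulVec v = 0) :
    (X - C lam) ^ m ∣ p := by
  rcases eq_or_ne p 0 with rfl | hp
  · exact dvd_zero _
  set r := rootMultiplicity lam p with hr
  by_cases hrm : m ≤ r
  · exact dvd_trans (pow_dvd_pow _ hrm) (Polynomial.pow_rootMultiplicity_dvd p lam)
  push_neg at hrm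
  set q := p /ₘ (X - C lam) ^ r with hqdef
  have hq : (X - C lam) ^ r * q = p := Polynomial.pow_mul_divByMonic_rootMultiplicity_eq p lam
  have hqe : q.eval lam ≠ 0 := Polynomial.eval_divByMonic_pow_rootMultiplicity_ne_zero lam hp
  obtain ⟨q₁, hq₁⟩ := Polynomial.X_sub_C_dvd_sub_C_eval (a := lam) (p := q)
  have hqexp : q = C (q.eval lam) + (X - C lam) * q₁ := by rw [← hq₁]; ring
  have key : aeval (jordanBlock m lam) p
      = q.eval lam • (shiftN m ^ r) + (shiftN m ^ (r + 1)) * aeval (jordanBlock m lam) q₁ := by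
    conv_lhs => rw [← hq, hqexp]
    rw [_root_.map_mul, map_pow, aeval_X_sub_C, map_add, _root_.map_mul,
      aeval_X_sub_C, aeval_C, Algebra.algebraMap_eq_smul_one, mul_add]
    rw [mul_smul_comm, mul_one, ← mul_assoc, ← pow_succ]
  have := congrFun h0 ⟨m - 1 - r, by omega⟩
  rw [key, add_mulVec, smul_mulVec, ← mulVec_mulVec] at this
  simp only [Pi.add_apply, Pi.smul_apply, Pi.zero_apply] at this
  rw [shiftN_pow_mulVec, shiftN_pow_mulVec] at this
  rw [dif_pos (show (m - 1 - r : ℕ) + r < m by omega)] at this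
  rw [dif_neg (show ¬((m - 1 - r : ℕ) + (r + 1) < m) by omega)] at this
  rw [show (⟨(m-1-r) + r, by omega⟩ : Fin m) = ⟨m - 1, by omega⟩ from Fin.ext (by simp; omega)] at this
  simp only [smul_eq_mul, add_zero] at this
  exact absurd this (mul_ne_zero hqe hv)

section BD
variable {k : ℕ} {m : Fin k → ℕ}

/-- `blockDiagonal'` as an `AlgHom`. -/
def bdAlgHom (m : Fin k → ℕ) :
    (∀ d, Matrix (Fin (m d)) (Fin (m d)) ℂ) →ₐ[ℂ] Matrix (Σ d, Fin (m d)) (Σ d, Fin (m d)) ℂ :=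
  { Matrix.blockDiagonal'RingHom (fun d => Fin (m d)) ℂ with
    commutes' := fun r => by
      show blockDiagonal' _ = _
      rw [Algebra.algebraMap_eq_smul_one, blockDiagonal'_smul, blockDiagonal'_one]
      exact (Algebra.algebraMap_eq_smul_one r).symm }

lemma bd_mulVec (M : ∀ d, Matrix (Fin (m d)) (Fin (m d)) ℂ) (v : (Σ d, Fin (m d)) → ℂ)
    (d : Fin k) (j : Fin (m d)) :
    (blockDiagonal' M).mulVec v ⟨d, j⟩ = (M d).mulVec (fun j' => v ⟨d, j'⟩) j := by
  rw [mulVec, dotProduct, ← Finset.univ_sigma_univ, Finset.sum_sigma]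
  rw [Finset.sum_eq_single d]
  · simp [blockDiagonal'_apply, mulVec, dotProduct]
  · intro e _ he
    apply Finset.sum_eq_zero
    intro j' _
    rw [blockDiagonal'_apply_ne _ _ _ (Ne.symm he), zero_mul]
  · simp

lemma aeval_bd (M : ∀ d, Matrix (Fin (m d)) (Fin (m d)) ℂ) (p : ℂ[X]) :
    aeval (blockDiagonal' M) p = blockDiagonal' (fun d => aeval (M d) p) := by
  have h1 : aeval (bdAlgHom m M) p = bdAlgHom m (aeval M p) :=
    Polynomial.aeval_algHom_apply (bdAlgHom m) M p
  have h2 : aeval M p = fun d => aeval (M d) p := by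
    funext d
    exact (Polynomial.aeval_algHom_apply
      (Pi.evalAlgHom ℂ (fun d => Matrix (Fin (m d)) (Fin (m d)) ℂ) d) M p).symm
  rw [h2] at h1
  exact h1
end BD

lemma block_annihilate'' (m : ℕ) (lam : ℂ) (p : ℂ[X]) (w : Fin m → ℂ)
    (hdvd : (X - C lam) ^ m ∣ p) :
    (aeval (jordanBlock m lam) p).mulVec w = 0 := by
  obtain ⟨q, hq⟩ := hdvd
  rw [hq, _root_.map_mul, map_pow, aeval_X_sub_C, ← mulVec_mulVec]
  funext i
  rw [shiftN_pow_mulVec, dif_neg (by omega)]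
  simp

lemma sum_mulVec {ι n' : Type*} [Fintype n'] (s : Finset ι) (A : ι → Matrix n' n' ℂ)
    (v : n' → ℂ) : (∑ i ∈ s, A i).mulVec v = ∑ i ∈ s, (A i).mulVec v := by
  induction s using Finset.cons_induction with
  | empty => simp [Matrix.zero_mulVec]
  | cons a s ha ih => simp [Finset.sum_cons, Matrix.add_mulVec, ih]

/-- for a block Jordan matrix with pairwise distinct eigenvalues, a
vector is cyclic iff its last coordinate within each block is nonzero. -/
theorem cyclic_iff_block_last_coords_ne_zero (k : ℕ) (m : Fin k → ℕ)
    (hm : ∀ d, 0 < m d) (lam : Fin k → ℂ) (hlam : Function.Injective lam)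
    (v : (Σ d : Fin k, Fin (m d)) → ℂ) :
    LinearIndependent ℂ (fun i : Fin (∑ d, m d) =>
        ((Matrix.blockDiagonal' (fun d => jordanBlock (m d) (lam d))) ^ (i : ℕ)).mulVec v)
      ↔ ∀ d : Fin k, v ⟨d, ⟨m d - 1, by have := hm d; omega⟩⟩ ≠ 0 := by
  classical
  set n := ∑ d, m d with hn
  set J := Matrix.blockDiagonal' (fun d => jordanBlock (m d) (lam d)) with hJ
  have hcomp : ∀ (p : ℂ[X]) (d : Fin k) (j : Fin (m d)),
      (aeval J p).mulVec v ⟨d, j⟩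
        = (aeval (jordanBlock (m d) (lam d)) p).mulVec (fun j' => v ⟨d, j'⟩) j := by
    intro p d j
    rw [hJ, aeval_bd, bd_mulVec]
  have hsum : ∀ p : ℂ[X], p.natDegree < n →
      (aeval J p).mulVec v = ∑ i : Fin n, p.coeff i • (J ^ (i : ℕ)).mulVec v := by
    intro p hdeg
    rw [aeval_eq_sum_range' hdeg, ← Fin.sum_univ_eq_sum_range (fun i => p.coeff i • J ^ i) n,
      _root_.sum_mulVec]
    congr 1
    funext i
    rw [smul_mulVec]
  constructor
  · intro hli d
    by_contra hvd
    set p : ℂ[X] := (X - C (lam d)) ^ (m d - 1) *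
      ∏ e ∈ Finset.univ.erase d, (X - C (lam e)) ^ (m e) with hpdef
    have hprodmono : (∏ e ∈ Finset.univ.erase d, (X - C (lam e)) ^ (m e)).Monic :=
      monic_prod_of_monic _ _ fun e _ => (monic_X_sub_C _).pow _
    have hmono : p.Monic := ((monic_X_sub_C _).pow _).mul hprodmono
    have hmd : m d ≤ n := Finset.single_le_sum (f := m) (fun e _ => Nat.zero_le _)
      (Finset.mem_univ d)
    have hsumerase : ∑ e ∈ Finset.univ.erase d, m e = n - m d := by
      have := Finset.add_sum_erase Finset.univ m (Finset.mem_univ d)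
      omega
    have hdeg : p.natDegree = n - 1 := by
      rw [hpdef, ((monic_X_sub_C _).pow _).natDegree_mul hprodmono, natDegree_pow,
        natDegree_X_sub_C, natDegree_prod_of_monic _ _ (fun e _ => (monic_X_sub_C _).pow _)]
      simp_rw [natDegree_pow, natDegree_X_sub_C, mul_one]
      rw [hsumerase]
      have := hm d
      omega
    have hn1 : 1 ≤ n := le_trans (hm d) hmd
    have hzero : (aeval J p).mulVec v = 0 := by
      funext x
      obtain ⟨e, j⟩ := x
      simp only [Pi.zero_apply]
      rw [hcomp]
      rcases eq_or_ne e d with rfl | he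
      · exact congrFun (block_annihilate (m e) (lam e) (hm e) p _ hvd (dvd_mul_right _ _)) j
      · refine congrFun (block_annihilate'' (m e) (lam e) p _ ?_) j
        exact dvd_mul_of_dvd_right
          (Finset.dvd_prod_of_mem _ (Finset.mem_erase.mpr ⟨he, Finset.mem_univ e⟩)) _
    rw [Fintype.linearIndependent_iff] at hli
    have h0 := hli (fun i => p.coeff i) (by rw [← hsum p (by omega)]; exact hzero)
    have h1 := h0 ⟨n - 1, by omega⟩
    simp only at h1
    rw [← hdeg, hmono.coeff_natDegree] at h1
    exact one_ne_zero h1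
  · intro hv
    rw [Fintype.linearIndependent_iff]
    intro c hc i
    set p : ℂ[X] := ∑ i : Fin n, C (c i) * X ^ (i : ℕ) with hpdef
    have hcoeff : ∀ j : ℕ, p.coeff j = if h : j < n then c ⟨j, h⟩ else 0 := by
      intro j
      rw [hpdef, finset_sum_coeff]
      simp_rw [coeff_C_mul, coeff_X_pow]
      split
      · rename_i h
        rw [Finset.sum_eq_single (⟨j, h⟩ : Fin n)]
        · simp
        · intro b _ hb
          rw [if_neg ?_, mul_zero]
          intro hb'
          exact hb (Fin.ext hb'.symm)
        · simp
      · rename_i h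
        apply Finset.sum_eq_zero
        intro b _
        rw [if_neg ?_, mul_zero]
        intro hb'
        exact h (hb' ▸ b.isLt)
    have hp0 : p = 0 := by
      by_contra hp
      have hdeg : p.natDegree < n := by
        by_contra hd
        push_neg at hd
        have h1 : p.coeff p.natDegree ≠ 0 := by
          rw [coeff_natDegree]
          exact leadingCoeff_ne_zero.mpr hp
        rw [hcoeff, dif_neg (by omega)] at h1
        exact h1 rfl
      have hzero : (aeval J p).mulVec v = 0 := by
        rw [hsum p hdeg]
        have hce : ∀ i : Fin n, p.coeff i = c i := fun i => by
          rw [hcoeff, dif_pos i.isLt]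
        calc ∑ i : Fin n, p.coeff i • (J ^ (i : ℕ)).mulVec v
            = ∑ i : Fin n, c i • (J ^ (i : ℕ)).mulVec v := by
              exact Finset.sum_congr rfl fun i _ => by rw [hce i]
          _ = 0 := hc
      have hdvd : ∀ d : Fin k, (X - C (lam d)) ^ (m d) ∣ p := by
        intro d
        refine block_dvd (m d) (lam d) (hm d) p (fun j' => v ⟨d, j'⟩) (hv d) ?_
        funext j
        simp only [Pi.zero_apply]
        rw [← hcomp p d j, hzero]
        rfl
      have hprod : (∏ d : Fin k, (X - C (lam d)) ^ (m d)) ∣ p :=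
        Finset.prod_dvd_of_coprime
          (fun a _ b _ hab => ((pairwise_coprime_X_sub_C hlam) hab).pow)
          (fun d _ => hdvd d)
      have hnle : n ≤ p.natDegree := by
        have h2 := natDegree_le_of_dvd hprod hp
        rw [natDegree_prod_of_monic _ _ (fun e _ => (monic_X_sub_C _).pow _)] at h2
        simp_rw [natDegree_pow, natDegree_X_sub_C, mul_one] at h2
        exact h2
      omega
    have h3 := hcoeff (i : ℕ)
    rw [hp0, coeff_zero, dif_pos i.isLt] at h3
    exact (congrArg c (Fin.eta i i.isLt)).symm.trans h3.symm
end

section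
/- Define the 4×4 real matrices A₁ and A₂ by A₁ having nonzero entries (A₁)_{1,1}=a, (A₁)_{2,1}=c, (A₁)_{3,1}=c, (A₁)_{4,2}=b, and A₂ having nonzero entries (A₂)_{1,1}=a, (A₂)_{2,2}=a, (A₂)_{3,2}=c, (A₂)_{4,3}=b (all other entries zero). Then for all natural numbers k ≥ 2 and s ≥ 0, the bottom-right 2×2 submatrices of A₁^{k+s}·(A₁^k)ᵀ and A₂^{k+s}·(A₂^k)ᵀ are equal. -/
open Matrix

/-- The first parameter matrix of the observational-equivalence example. -/
def stmtA₁ (a b c : ℝ) : Matrix (Fin 4) (Fin 4) ℝ :=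
  !![a, 0, 0, 0; c, 0, 0, 0; c, 0, 0, 0; 0, b, 0, 0]

/-- The second parameter matrix of the observational-equivalence example. -/
def stmtA₂ (a b c : ℝ) : Matrix (Fin 4) (Fin 4) ℝ :=
  !![a, 0, 0, 0; 0, a, 0, 0; 0, c, 0, 0; 0, 0, b, 0]

lemma stmtA₁_pow (a b c : ℝ) (m : ℕ) :
    stmtA₁ a b c ^ (m + 2) =
      !![a ^ (m + 2), 0, 0, 0; c * a ^ (m + 1), 0, 0, 0;
         c * a ^ (m + 1), 0, 0, 0; b * c * a ^ m, 0, 0, 0] := by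
  induction m with
  | zero =>
    rw [pow_two, stmtA₁]
    ext i j
    fin_cases i <;> fin_cases j <;>
      simp [Matrix.mul_apply, Fin.sum_univ_four, Matrix.vecHead, Matrix.vecTail] <;> ring
  | succ n ih =>
    have : n + 1 + 2 = (n + 2) + 1 := by ring
    rw [this, pow_succ, ih, stmtA₁]
    ext i j
    fin_cases i <;> fin_cases j <;>
      simp [Matrix.mul_apply, Fin.sum_univ_four, Matrix.vecHead, Matrix.vecTail] <;> ring

lemma stmtA₂_pow (a b c : ℝ) (m : ℕ) :
    stmtA₂ a b c ^ (m + 2) =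
      !![a ^ (m + 2), 0, 0, 0; 0, a ^ (m + 2), 0, 0;
         0, c * a ^ (m + 1), 0, 0; 0, b * c * a ^ m, 0, 0] := by
  induction m with
  | zero =>
    rw [pow_two, stmtA₂]
    ext i j
    fin_cases i <;> fin_cases j <;>
      simp [Matrix.mul_apply, Fin.sum_univ_four, Matrix.vecHead, Matrix.vecTail] <;> ring
  | succ n ih =>
    have : n + 1 + 2 = (n + 2) + 1 := by ring
    rw [this, pow_succ, ih, stmtA₂]
    ext i j
    fin_cases i <;> fin_cases j <;>
      simp [Matrix.mul_apply, Fin.sum_univ_four, Matrix.vecHead, Matrix.vecTail] <;> ring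

/-- the bottom-right 2×2 submatrices of `A₁^{k+s}(A₁^k)ᵀ` and
`A₂^{k+s}(A₂^k)ᵀ` agree for all `k ≥ 2` and `s ≥ 0`. -/
theorem observational_equivalence (a b c : ℝ) (k s : ℕ) (hk : 2 ≤ k)
    (i j : Fin 4) (hi : 2 ≤ (i : ℕ)) (hj : 2 ≤ (j : ℕ)) :
    (stmtA₁ a b c ^ (k + s) * (stmtA₁ a b c ^ k)ᵀ) i j
      = (stmtA₂ a b c ^ (k + s) * (stmtA₂ a b c ^ k)ᵀ) i j := by
  obtain ⟨m, rfl⟩ : ∃ m, k = m + 2 := ⟨k - 2, by omega⟩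
  have h1 : m + 2 + s = (m + s) + 2 := by ring
  rw [h1, stmtA₁_pow, stmtA₂_pow, stmtA₁_pow, stmtA₂_pow]
  fin_cases i <;> fin_cases j <;> simp_all [Matrix.mul_apply, Fin.sum_univ_four,
    Matrix.vecHead, Matrix.vecTail] <;> ring
end
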